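/- Let P₁, P₂, τ₁, τ₂ > 0 satisfy τ₁·γ(P₂) ≤ τ₂·(γ(P₁+P₂) − γ(P₂)) (Case III), and set w₁ = (γ(P₁+P₂) − γ(P₂))/γ(P₁+P₂), A = (γ(P₁+P₂) − γ(P₂), γ(P₂)), B = (γ(P₁), γ(P₁+P₂) − γ(P₁)). Let D₁(r₁, r₂) = (1−w)·τ₂/γ(P₂) + τ₁·(γ(P₂) − (1−w)·r₂)/(γ(P₂)·r₁). Then for every (r₁, r₂) ∈ C₁ with r₁ > 0 and τ₁·r₂ ≤ τ₂·r₁: if w ∈ [0, w₁] then D₁(A) ≤ D₁(r₁, r₂), and if w ∈ [w₁, 1] then D₁(B) ≤ D₁(r₁, r₂). -/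

import Mathlib

/-- γ(x) = (1/2)·log₂(1+x). -/
noncomputable def gam (x : ℝ) : ℝ := (1/2) * Real.logb 2 (1 + x)

/-- The standard two-user Gaussian MAC capacity region. -/
def C1 (P₁ P₂ : ℝ) : Set (ℝ × ℝ) :=
  {r : ℝ × ℝ | 0 ≤ r.1 ∧ r.1 ≤ gam P₁ ∧ 0 ≤ r.2 ∧ r.2 ≤ gam P₂ ∧
    r.1 + r.2 ≤ gam (P₁ + P₂)}

/-- D₁(r₁, r₂) = (1−w)·τ₂/γ(P₂) + τ₁·(γ(P₂) − (1−w)·r₂)/(γ(P₂)·r₁). -/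
noncomputable def D1 (w τ₁ τ₂ P₂ r₁ r₂ : ℝ) : ℝ :=
  (1 - w) * τ₂ / gam P₂ + τ₁ * (gam P₂ - (1 - w) * r₂) / (gam P₂ * r₁)

lemma gam_pos {x : ℝ} (hx : 0 < x) : 0 < gam x := by
  have : (0:ℝ) < Real.logb 2 (1 + x) :=
    Real.logb_pos (by norm_num) (by linarith)
  unfold gam; linarith

lemma gam_lt {x y : ℝ} (hx : 0 ≤ x) (hy : 0 < y) : gam x < gam (x + y) := by
  have : Real.logb 2 (1 + x) < Real.logb 2 (1 + (x + y)) :=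
    Real.logb_lt_logb (by norm_num) (by linarith) (by linarith)
  unfold gam; linarith

lemma gam_subadd {x y : ℝ} (hx : 0 < x) (hy : 0 < y) :
    gam (x + y) ≤ gam x + gam y := by
  have h1 : (0:ℝ) < 1 + x := by linarith
  have h2 : (0:ℝ) < 1 + y := by linarith
  have hmul : Real.logb 2 ((1 + x) * (1 + y)) =
      Real.logb 2 (1 + x) + Real.logb 2 (1 + y) :=
    Real.logb_mul (ne_of_gt h1) (ne_of_gt h2)
  have hle : Real.logb 2 (1 + (x + y)) ≤ Real.logb 2 ((1 + x) * (1 + y)) := by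
    apply Real.logb_le_logb_of_le (by norm_num) (by linarith)
    nlinarith
  unfold gam
  nlinarith

theorem stmt_6 (P₁ P₂ τ₁ τ₂ w : ℝ) (hP₁ : 0 < P₁) (hP₂ : 0 < P₂)
    (hτ₁ : 0 < τ₁) (hτ₂ : 0 < τ₂)
    (hcase : τ₁ * gam P₂ ≤ τ₂ * (gam (P₁ + P₂) - gam P₂)) :
    ∀ r₁ r₂ : ℝ, (r₁, r₂) ∈ C1 P₁ P₂ → 0 < r₁ → τ₁ * r₂ ≤ τ₂ * r₁ →
      (w ∈ Set.Icc (0:ℝ) ((gam (P₁ + P₂) - gam P₂) / gam (P₁ + P₂)) →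
        D1 w τ₁ τ₂ P₂ (gam (P₁ + P₂) - gam P₂) (gam P₂) ≤ D1 w τ₁ τ₂ P₂ r₁ r₂) ∧
      (w ∈ Set.Icc ((gam (P₁ + P₂) - gam P₂) / gam (P₁ + P₂)) 1 →
        D1 w τ₁ τ₂ P₂ (gam P₁) (gam (P₁ + P₂) - gam P₁) ≤ D1 w τ₁ τ₂ P₂ r₁ r₂) := by
  intro r₁ r₂ hmem hr₁ hτr
  simp only [C1, Set.mem_setOf_eq] at hmem
  obtain ⟨hr1nn, hr1le, hr2nn, hr2le, hsum⟩ := hmem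
  have hg1 : 0 < gam P₁ := gam_pos hP₁
  have hg2 : 0 < gam P₂ := gam_pos hP₂
  have h2lt : gam P₂ < gam (P₁ + P₂) := by
    have := gam_lt (le_of_lt hP₂) hP₁
    rwa [add_comm P₂ P₁] at this
  have h1lt : gam P₁ < gam (P₁ + P₂) := gam_lt (le_of_lt hP₁) hP₂
  have hsub : gam (P₁ + P₂) ≤ gam P₁ + gam P₂ := gam_subadd hP₁ hP₂
  set g1 := gam P₁ with hg1def
  set g2 := gam P₂ with hg2def
  set g12 := gam (P₁ + P₂) with hg12def
  have hg12 : (0:ℝ) < g12 := lt_trans hg2 h2lt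
  constructor
  · rintro ⟨hw0, hw1⟩
    have hw1' : w * g12 ≤ g12 - g2 := (le_div_iff₀ hg12).mp hw1
    -- key polytope inequality
    have key : w * g2 * r₁ ≤ (g12 - g2) * (g2 - (1 - w) * r₂) := by
      nlinarith [mul_nonneg (by linarith : (0:ℝ) ≤ g12 - g2 - g12 * w)
          (by linarith : (0:ℝ) ≤ g2 - r₂),
        mul_nonneg (mul_nonneg hw0 (le_of_lt hg2))
          (by linarith : (0:ℝ) ≤ g12 - r₁ - r₂)]
    have hfrac : τ₁ * (g2 - (1 - w) * g2) / (g2 * (g12 - g2)) ≤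
        τ₁ * (g2 - (1 - w) * r₂) / (g2 * r₁) := by
      rw [div_le_div_iff₀ (mul_pos hg2 (by linarith)) (mul_pos hg2 hr₁)]
      nlinarith [mul_le_mul_of_nonneg_left key (le_of_lt hτ₁),
        mul_pos hτ₁ hg2]
    unfold D1
    linarith
  · rintro ⟨hw1, hwle⟩
    have hw1' : g12 - g2 ≤ w * g12 := (div_le_iff₀ hg12).mp hw1
    have hwnn : 0 ≤ 1 - w := by linarith
    have hc : 0 ≤ g2 - (1 - w) * (g12 - g1) := by
      nlinarith [mul_nonneg hwnn (le_of_lt hg1)]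
    -- key polytope inequality
    have key : (g2 - (1 - w) * (g12 - g1)) * r₁ ≤ g1 * (g2 - (1 - w) * r₂) := by
      rcases le_total r₂ (g12 - g1) with h | h
      · nlinarith [mul_nonneg (mul_nonneg (le_of_lt hg1) hwnn)
            (by linarith : (0:ℝ) ≤ g12 - g1 - r₂),
          mul_nonneg hc (by linarith : (0:ℝ) ≤ g1 - r₁)]
      · nlinarith [mul_nonneg (by linarith : (0:ℝ) ≤ g2 - (1 - w) * g12)
            (by linarith : (0:ℝ) ≤ r₂ - (g12 - g1)),
          mul_nonneg hc (by linarith : (0:ℝ) ≤ g12 - r₁ - r₂)]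
    have hfrac : τ₁ * (g2 - (1 - w) * (g12 - g1)) / (g2 * g1) ≤
        τ₁ * (g2 - (1 - w) * r₂) / (g2 * r₁) := by
      rw [div_le_div_iff₀ (mul_pos hg2 hg1) (mul_pos hg2 hr₁)]
      nlinarith [mul_le_mul_of_nonneg_left key (le_of_lt hτ₁),
        mul_pos hτ₁ hg2]
    unfold D1
    linarith
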